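/- Let R be a one-dimensional Noetherian domain and n ⊆ R a nonzero ideal. Every class of invertible fractional R-ideals modulo principal fractional ideals contains an integral representative coprime to n. -/

import Mathlib

open FractionalIdeal

/-- In a one-dimensional Noetherian domain `R`, every class of invertible fractional
ideals contains an integral representative coprime to a given nonzero ideal `n`:
for any invertible fractional ideal `a` there is `α ∈ K×` and an ideal `J ⊆ R` with
`J = αa` and `J + n = R`. -/
theorem stmt_7 {R K : Type*} [CommRing R] [IsDomain R] [IsNoetherianRing R]
    [Field K] [Algebra R K] [IsFractionRing R K]
    (hdim : ∀ p : Ideal R, p.IsPrime → p ≠ ⊥ → p.IsMaximal)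
    (n : Ideal R) (hn : n ≠ ⊥)
    (a : FractionalIdeal (nonZeroDivisors R) K) (ha : IsUnit a) :
    ∃ (α : K) (J : Ideal R), α ≠ 0 ∧
      (J : FractionalIdeal (nonZeroDivisors R) K) =
        FractionalIdeal.spanSingleton (nonZeroDivisors R) α * a ∧
      J ⊔ n = ⊤ := by
  classical
  obtain ⟨d, I, hd0, hIa⟩ := FractionalIdeal.exists_eq_spanSingleton_mul a
  have hinj : Function.Injective (algebraMap R K) := IsFractionRing.injective R K
  have hdK : algebraMap R K d ≠ 0 := fun h => hd0 (hinj (by rw [h, _root_.map_zero]))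
  have hIeq : (I : FractionalIdeal (nonZeroDivisors R) K) =
      spanSingleton (nonZeroDivisors R) (algebraMap R K d) * a := by
    rw [hIa, ← mul_assoc, spanSingleton_mul_spanSingleton, mul_inv_cancel₀ hdK,
      spanSingleton_one, one_mul]
  by_cases hnt : n = ⊤
  · exact ⟨algebraMap R K d, I, hdK, hIeq, by simp [hnt]⟩
  -- `I` is an invertible (integral) ideal
  have hIu : IsUnit (I : FractionalIdeal (nonZeroDivisors R) K) := by
    rw [hIeq]
    exact (IsUnit.of_mul_eq_one _ (by
      rw [spanSingleton_mul_spanSingleton, mul_inv_cancel₀ hdK, spanSingleton_one])).mul ha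
  obtain ⟨u, hu⟩ := hIu
  set b : FractionalIdeal (nonZeroDivisors R) K := (↑u⁻¹ : FractionalIdeal (nonZeroDivisors R) K) with hbdef
  have hb : (I : FractionalIdeal (nonZeroDivisors R) K) * b = 1 := by
    rw [hbdef, ← hu, ← Units.val_mul, mul_inv_cancel, Units.val_one]
  -- the finitely many primes over `n`
  have hfin : (n.minimalPrimes).Finite := by
    rw [Ideal.minimalPrimes_eq_comap]
    exact (minimalPrimes.finite_of_isNoetherianRing (R ⧸ n)).image _
  set ps : Finset (Ideal R) := hfin.toFinset with hpsdef
  have hps1 : ∀ p ∈ ps, p.IsMaximal ∧ n ≤ p := by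
    intro p hp
    rw [hpsdef, Set.Finite.mem_toFinset] at hp
    obtain ⟨⟨hprime, hle⟩, -⟩ := hp
    refine ⟨hdim p hprime fun h => hn (le_bot_iff.mp (h ▸ hle)), hle⟩
  have hps2 : ∀ m : Ideal R, m.IsMaximal → n ≤ m → m ∈ ps := by
    intro m hm hnm
    haveI := hm.isPrime
    obtain ⟨q, hq, hqm⟩ := Ideal.exists_minimalPrimes_le hnm
    have hqb : q ≠ ⊥ := fun h => hn (le_bot_iff.mp (h ▸ hq.1.2))
    have : q = m := (hdim q hq.1.1 hqb).eq_of_le hm.ne_top hqm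
    rw [hpsdef, Set.Finite.mem_toFinset]
    exact this ▸ hq
  -- for each prime over n, find an element of b pairing with I outside p
  have H : ∀ p ∈ ps, ∃ r : R, r ∉ p ∧ ∃ β ∈ b, ∃ x ∈ I,
      algebraMap R K x * β = algebraMap R K r := by
    intro p hp
    have hple : ¬((I : FractionalIdeal (nonZeroDivisors R) K) * b ≤ (p : FractionalIdeal _ K)) := by
      rw [hb]
      intro h
      obtain ⟨r, hr, hr1⟩ := (FractionalIdeal.mem_coeIdeal _).mp (h (FractionalIdeal.one_mem_one _))
      exact (hps1 p hp).1.ne_top ((Ideal.eq_top_iff_one _).mpr (by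
        have h1 : r = 1 := hinj (by rw [hr1, _root_.map_one])
        rwa [h1] at hr))
    rw [FractionalIdeal.mul_le] at hple
    push_neg at hple
    obtain ⟨i, hi, j, hj, hij⟩ := hple
    obtain ⟨x, hx, rfl⟩ := (FractionalIdeal.mem_coeIdeal _).mp hi
    have : algebraMap R K x * j ∈ (1 : FractionalIdeal (nonZeroDivisors R) K) := by
      rw [← hb]; exact FractionalIdeal.mul_mem_mul hi hj
    obtain ⟨r, hr⟩ := (FractionalIdeal.mem_one_iff _).mp this
    refine ⟨r, fun hrp => hij ((FractionalIdeal.mem_coeIdeal _).mpr ⟨r, hrp, hr⟩), j, hj, x, hx, hr.symm⟩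
  choose r hr β hβ xi hxi heq using fun p : {p // p ∈ ps} => H p p.2
  -- avoidance elements
  have He : ∀ p : {p // p ∈ ps}, ∃ e : R, e ∉ (p : Ideal R) ∧
      ∀ q ∈ ps, q ≠ (p : Ideal R) → e ∈ q := by
    intro p
    haveI hpP : (p : Ideal R).IsPrime := (hps1 p p.2).1.isPrime
    have hnle : ¬(∏ q ∈ ps.erase (p : Ideal R), q ≤ (p : Ideal R)) := by
      intro h
      obtain ⟨q, hq, hqle⟩ := (Ideal.IsPrime.prod_le hpP).mp h
      have hqps := Finset.mem_of_mem_erase hq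
      have : q = (p : Ideal R) := (hps1 q hqps).1.eq_of_le (hps1 p p.2).1.ne_top hqle
      exact Finset.ne_of_mem_erase hq this
    obtain ⟨e, he, hep⟩ := SetLike.not_le_iff_exists.mp hnle
    refine ⟨e, hep, fun q hq hqp => ?_⟩
    have : (∏ q' ∈ ps.erase (p : Ideal R), q') ≤ q :=
      le_trans Ideal.prod_le_inf (Finset.inf_le (Finset.mem_erase.mpr ⟨hqp, hq⟩))
    exact this he
  choose e he1 he2 using He
  set α : K := ∑ p ∈ ps.attach, algebraMap R K (e p) * β p with hα
  have hαb : α ∈ b := by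
    refine Submodule.sum_mem _ fun p _ => ?_
    rw [← Algebra.smul_def]
    exact Submodule.smul_mem _ _ (hβ p)
  -- key computation
  have key : ∀ (m : Ideal R) (hm : m ∈ ps), ∃ t : R, t ∉ m ∧
      α * algebraMap R K (xi ⟨m, hm⟩) = algebraMap R K t := by
    intro m hm
    set M : {p // p ∈ ps} := ⟨m, hm⟩ with hM
    have hs : ∀ p : {p // p ∈ ps}, ∃ s : R,
        algebraMap R K s = β p * algebraMap R K (xi M) := by
      intro p
      have : algebraMap R K (xi M) * β p ∈ (1 : FractionalIdeal (nonZeroDivisors R) K) := by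
        rw [← hb]
        exact FractionalIdeal.mul_mem_mul ((FractionalIdeal.mem_coeIdeal _).mpr ⟨xi M, hxi M, rfl⟩) (hβ p)
      obtain ⟨s, hs⟩ := (FractionalIdeal.mem_one_iff _).mp this
      exact ⟨s, by rw [hs, mul_comm]⟩
    choose s hs using hs
    refine ⟨∑ p ∈ ps.attach, e p * s p, ?_, ?_⟩
    · intro hmem
      have hMs : s M = r M := by
        apply hinj
        rw [hs M, mul_comm, heq M]
      have hrest : ∑ p ∈ ps.attach.erase M, e p * s p ∈ m :=
        Ideal.sum_mem _ fun p hp => m.mul_mem_right _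
          (he2 p m hm fun h => Finset.ne_of_mem_erase hp (Subtype.ext (show (p : Ideal R) = (M : Ideal R) from h.symm)))
      have hsum : e M * s M + ∑ p ∈ ps.attach.erase M, e p * s p = ∑ p ∈ ps.attach, e p * s p :=
        Finset.add_sum_erase ps.attach (fun p => e p * s p) (Finset.mem_attach ps M)
      have hMm : e M * s M ∈ m := by
        have := m.sub_mem hmem hrest
        rwa [← hsum, add_sub_cancel_right] at this
      haveI hpP : m.IsPrime := (hps1 m hm).1.isPrime
      rcases hpP.mem_or_mem hMm with h | h
      · exact he1 M h
      · rw [hMs] at h; exact hr M h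
    · rw [hα, Finset.sum_mul, _root_.map_sum]
      refine Finset.sum_congr rfl fun p _ => ?_
      rw [_root_.map_mul, mul_assoc, ← hs p]
  -- α ≠ 0
  obtain ⟨m₀, hm₀max, hm₀n⟩ := Ideal.exists_le_maximal n hnt
  have hm₀ps := hps2 m₀ hm₀max hm₀n
  obtain ⟨t₀, ht₀, heq₀⟩ := key m₀ hm₀ps
  have hα0 : α ≠ 0 := by
    intro h0
    rw [h0, zero_mul] at heq₀
    have ht : t₀ = 0 := hinj (by rw [_root_.map_zero, ← heq₀])
    rw [ht] at ht₀
    exact ht₀ m₀.zero_mem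
  -- the integral representative
  have hle1 : spanSingleton (nonZeroDivisors R) α * (I : FractionalIdeal _ K) ≤ 1 := by
    calc spanSingleton (nonZeroDivisors R) α * (I : FractionalIdeal _ K)
        ≤ b * (I : FractionalIdeal _ K) :=
          _root_.mul_le_mul_left (spanSingleton_le_iff_mem.mpr hαb) _
      _ = 1 := by rw [mul_comm, hb]
  obtain ⟨J, hJ⟩ := le_one_iff_exists_coeIdeal.mp hle1
  refine ⟨α * algebraMap R K d, J, mul_ne_zero hα0 hdK, ?_, ?_⟩
  · rw [← spanSingleton_mul_spanSingleton, mul_assoc, ← hIeq, hJ]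
  · by_contra hJn
    obtain ⟨m, hmmax, hm⟩ := Ideal.exists_le_maximal _ hJn
    have hmps := hps2 m hmmax (le_trans le_sup_right hm)
    have hJm : J ≤ m := le_trans le_sup_left hm
    obtain ⟨t, ht, heqt⟩ := key m hmps
    have : α * algebraMap R K (xi ⟨m, hmps⟩) ∈ (J : FractionalIdeal (nonZeroDivisors R) K) := by
      rw [hJ]
      exact FractionalIdeal.mul_mem_mul (mem_spanSingleton_self _ α)
        ((FractionalIdeal.mem_coeIdeal _).mpr ⟨xi ⟨m, hmps⟩, hxi ⟨m, hmps⟩, rfl⟩)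
    rw [heqt] at this
    obtain ⟨t', ht', htt⟩ := (FractionalIdeal.mem_coeIdeal _).mp this
    exact ht (hJm (hinj htt ▸ ht'))
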